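/- Let Q be an irreducible n×n transition rate matrix with stationary distribution π, D = Diag(γ₁,...,γₙ) with γᵢ > 0, and c ≥ 0. Then πᵀ(D - cQ)⁻¹𝟙 ≥ 1/(Σᵢ πᵢγᵢ), i.e., m_eq(c) is at least the deterministic value k_in/E_π(γ). -/
import Mathlib


open Matrix

def IsIrreducibleRateMatrix {n : ℕ} (Q : Matrix (Fin n) (Fin n) ℝ) : Prop :=
  ∀ S : Finset (Fin n), S.Nonempty → S ≠ Finset.univ → ∃ i ∈ S, ∃ j, j ∉ S ∧ Q i j ≠ 0

/-- The steady-state mean is at least the deterministic value: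
`πᵀ(D - cQ)⁻¹𝟙 ≥ 1/(Σᵢ πᵢγᵢ)`. -/
theorem meq_ge_det {n : ℕ} (Q : Matrix (Fin n) (Fin n) ℝ) (γ π : Fin n → ℝ)
    (hoff : ∀ i j, i ≠ j → 0 ≤ Q i j) (hrow : ∀ i, ∑ j, Q i j = 0)
    (hirr : IsIrreducibleRateMatrix Q) (hγ : ∀ i, 0 < γ i)
    (hπ : ∀ i, 0 ≤ π i) (hπsum : ∑ i, π i = 1)
    (hπstat : ∀ j, ∑ i, π i * Q i j = 0)
    (c : ℝ) (hc : 0 ≤ c) :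
    (∑ i, π i * γ i)⁻¹ ≤ π ⬝ᵥ ((Matrix.diagonal γ - c • Q)⁻¹ *ᵥ fun _ => 1) := by
  classical
  set B : Matrix (Fin n) (Fin n) ℝ := Matrix.diagonal γ - c • Q with hBdef
  have hQsum : ∀ i, ∑ j ∈ Finset.univ.erase i, Q i j = - Q i i := by
    intro i
    have h := hrow i
    rw [← Finset.sum_erase_add Finset.univ _ (Finset.mem_univ i)] at h
    linarith
  -- B is strictly row diagonally dominant, hence invertible
  have hdet : B.det ≠ 0 := by
    apply det_ne_zero_of_sum_row_lt_diag
    intro k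
    have hBkk : B k k = γ k - c * Q k k := by
      simp [hBdef, Matrix.sub_apply, Matrix.diagonal_apply_eq]
    have hQkk : Q k k ≤ 0 := by
      have h1 := hQsum k
      have h2 : 0 ≤ ∑ j ∈ Finset.univ.erase k, Q k j :=
        Finset.sum_nonneg fun j hj => hoff k j (Ne.symm (Finset.ne_of_mem_erase hj))
      linarith
    have hsum : ∑ j ∈ Finset.univ.erase k, ‖B k j‖ = c * (- Q k k) := by
      rw [show c * (- Q k k) = ∑ j ∈ Finset.univ.erase k, c * Q k j by
        rw [← Finset.mul_sum, hQsum k]]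
      apply Finset.sum_congr rfl
      intro j hj
      have hjk : k ≠ j := fun h => Finset.ne_of_mem_erase hj h.symm
      have hBkj : B k j = -(c * Q k j) := by
        simp [hBdef, Matrix.sub_apply, Matrix.diagonal_apply_ne _ hjk]
      rw [hBkj, Real.norm_eq_abs, abs_neg, abs_of_nonneg (mul_nonneg hc (hoff k j hjk))]
    rw [hsum, hBkk, Real.norm_eq_abs,
      abs_of_pos (by nlinarith [hγ k, mul_nonneg hc (neg_nonneg.mpr hQkk)])]
    nlinarith [hγ k, mul_nonneg hc (neg_nonneg.mpr hQkk)]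
  have hunit : IsUnit B.det := isUnit_iff_ne_zero.mpr hdet
  set x : Fin n → ℝ := B⁻¹ *ᵥ (fun _ => (1 : ℝ)) with hxdef
  -- the linear system componentwise
  have hBx : ∀ i, γ i * x i - c * ∑ j, Q i j * x j = 1 := by
    have h : B *ᵥ x = fun _ => (1 : ℝ) := by
      rw [hxdef, Matrix.mulVec_mulVec, Matrix.mul_nonsing_inv _ hunit, Matrix.one_mulVec]
    intro i
    have hi := congrFun h i
    have he : (B *ᵥ x) i = γ i * x i - c * ∑ j, Q i j * x j := by
      simp only [hBdef, Matrix.mulVec, dotProduct, Matrix.sub_apply, Matrix.smul_apply,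
        smul_eq_mul, sub_mul, Finset.sum_sub_distrib]
      congr 1
      · rw [Finset.sum_eq_single i (fun j _ hj => by
          simp [Matrix.diagonal_apply_ne' _ hj]) (by simp), Matrix.diagonal_apply_eq]
      · rw [Finset.mul_sum]
        apply Finset.sum_congr rfl
        intro j _
        ring
    rw [he] at hi
    exact hi
  -- exchange of summation with stationarity
  have hexch : ∑ i, π i * ∑ j, Q i j * x j = 0 := by
    have h : ∑ i, π i * ∑ j, Q i j * x j = ∑ j, (∑ i, π i * Q i j) * x j := by
      simp_rw [Finset.mul_sum, Finset.sum_mul]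
      rw [Finset.sum_comm]
      exact Finset.sum_congr rfl fun j _ => Finset.sum_congr rfl fun i _ => by ring
    rw [h]
    simp [hπstat]
  -- ∑ πγx = 1
  have h1 : ∑ i, π i * γ i * x i = 1 := by
    have h : ∑ i, π i * γ i * x i = ∑ i, (π i + c * (π i * ∑ j, Q i j * x j)) := by
      apply Finset.sum_congr rfl
      intro i _
      linear_combination π i * hBx i
    rw [h, Finset.sum_add_distrib, hπsum, ← Finset.mul_sum, hexch, mul_zero, add_zero]
  -- the symmetrized generator is a Laplacian: the quadratic form is nonpositive
  have hP : ∑ i, ∑ j, π i * Q i j * (x i * x j) ≤ 0 := by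
    set s : Fin n → Fin n → ℝ := fun i j => π i * Q i j + π j * Q j i with hsdef
    have hrow_s : ∀ i, ∑ j, s i j = 0 := by
      intro i
      simp only [hsdef]
      rw [Finset.sum_add_distrib, ← Finset.mul_sum, hrow i, mul_zero, zero_add, hπstat i]
    have hcol_s : ∀ j, ∑ i, s i j = 0 := by
      intro j
      simp only [hsdef]
      rw [Finset.sum_add_distrib, hπstat j, zero_add, ← Finset.mul_sum, hrow j, mul_zero]
    have hS : 0 ≤ ∑ i, ∑ j, s i j * (x i - x j) ^ 2 := by
      apply Finset.sum_nonneg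
      intro i _
      apply Finset.sum_nonneg
      intro j _
      by_cases h : i = j
      · subst h; simp
      · exact mul_nonneg (add_nonneg (mul_nonneg (hπ i) (hoff i j h))
          (mul_nonneg (hπ j) (hoff j i (Ne.symm h)))) (sq_nonneg _)
    have hA1 : ∑ i, ∑ j, s i j * x i ^ 2 = 0 := by
      have h : ∀ i : Fin n, ∑ j, s i j * x i ^ 2 = (∑ j, s i j) * x i ^ 2 :=
        fun i => (Finset.sum_mul _ _ _).symm
      simp_rw [h, hrow_s]
      simp
    have hA2 : ∑ i, ∑ j, s i j * x j ^ 2 = 0 := by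
      rw [Finset.sum_comm]
      have h : ∀ j : Fin n, ∑ i, s i j * x j ^ 2 = (∑ i, s i j) * x j ^ 2 :=
        fun j => (Finset.sum_mul _ _ _).symm
      simp_rw [h, hcol_s]
      simp
    have hA3 : ∑ i, ∑ j, s i j * (x i * x j)
        = 2 * ∑ i, ∑ j, π i * Q i j * (x i * x j) := by
      have h : ∀ i j : Fin n, s i j * (x i * x j)
          = π i * Q i j * (x i * x j) + π j * Q j i * (x j * x i) := by
        intro i j; simp only [hsdef]; ring
      simp_rw [h, Finset.sum_add_distrib]
      rw [Finset.sum_comm (f := fun i j => π j * Q j i * (x j * x i))]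
      ring
    have hexpand : ∑ i, ∑ j, s i j * (x i - x j) ^ 2
        = (∑ i, ∑ j, s i j * x i ^ 2) + (∑ i, ∑ j, s i j * x j ^ 2)
          - 2 * ∑ i, ∑ j, s i j * (x i * x j) := by
      have h : ∀ i j : Fin n, s i j * (x i - x j) ^ 2
          = s i j * x i ^ 2 + s i j * x j ^ 2 - 2 * (s i j * (x i * x j)) := by
        intro i j; ring
      simp_rw [h, Finset.sum_sub_distrib, Finset.sum_add_distrib, ← Finset.mul_sum]
    rw [hexpand, hA1, hA2, hA3] at hS
    linarith
  -- the quadratic bound ∑ πγx² ≤ ∑ πx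
  have hm : ∑ i, π i * γ i * x i ^ 2 ≤ ∑ i, π i * x i := by
    have h : ∑ i, π i * x i
        = ∑ i, π i * γ i * x i ^ 2 - c * ∑ i, ∑ j, π i * Q i j * (x i * x j) := by
      rw [Finset.mul_sum, ← Finset.sum_sub_distrib]
      apply Finset.sum_congr rfl
      intro i _
      have h2 : π i * x i * (γ i * x i - c * ∑ j, Q i j * x j) = π i * x i * 1 := by
        rw [hBx i]
      have h3 : c * ∑ j, π i * Q i j * (x i * x j)
          = c * (π i * x i * ∑ j, Q i j * x j) := by
        congr 1
        rw [Finset.mul_sum]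
        exact Finset.sum_congr rfl fun j _ => by ring
      linear_combination -h2 + h3
    have h4 : c * ∑ i, ∑ j, π i * Q i j * (x i * x j) ≤ 0 :=
      mul_nonpos_of_nonneg_of_nonpos hc hP
    linarith
  -- Cauchy–Schwarz: 1 ≤ (∑ πγ)(∑ πγx²)
  have hcs : 1 ≤ (∑ i, π i * γ i) * ∑ i, π i * γ i * x i ^ 2 := by
    have h := Finset.sum_mul_sq_le_sq_mul_sq Finset.univ
      (fun i => Real.sqrt (π i * γ i)) (fun i => Real.sqrt (π i * γ i) * x i)
    have e2 : ∀ i : Fin n, Real.sqrt (π i * γ i) ^ 2 = π i * γ i :=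
      fun i => Real.sq_sqrt (mul_nonneg (hπ i) (hγ i).le)
    have e1 : ∀ i : Fin n,
        Real.sqrt (π i * γ i) * (Real.sqrt (π i * γ i) * x i) = π i * γ i * x i := by
      intro i
      rw [← mul_assoc, Real.mul_self_sqrt (mul_nonneg (hπ i) (hγ i).le)]
    have e3 : ∀ i : Fin n, (Real.sqrt (π i * γ i) * x i) ^ 2 = π i * γ i * x i ^ 2 := by
      intro i
      rw [mul_pow, e2 i]
    simp_rw [e1, e2, e3] at h
    rwa [h1, one_pow] at h
  have hpos : 0 < ∑ i, π i * γ i := by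
    obtain ⟨i, hi⟩ : ∃ i, 0 < π i := by
      by_contra h
      push_neg at h
      have hz : ∀ i, π i = 0 := fun i => le_antisymm (h i) (hπ i)
      rw [Finset.sum_congr rfl (fun i _ => hz i), Finset.sum_const, smul_zero] at hπsum
      norm_num at hπsum
    exact Finset.sum_pos' (fun i _ => mul_nonneg (hπ i) (hγ i).le)
      ⟨i, Finset.mem_univ i, mul_pos hi (hγ i)⟩
  show (∑ i, π i * γ i)⁻¹ ≤ ∑ i, π i * x i
  rw [inv_eq_one_div, div_le_iff₀ hpos]
  nlinarith [hcs, hm, hpos, mul_le_mul_of_nonneg_left hm hpos.le]
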